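/- Let G be a finite noncyclic group and suppose exactly m distinct noncyclic proper subgroups of G appear in some irredundant cover of G. Then m + 1 ≤ β(G) ≤ 2^m, where β(G) is the number of irredundant covers of G. -/

import Mathlib

/-- A cover of a group: a finite collection of proper subgroups whose union is the group. -/
def IsCover {G : Type*} [Group G] (S : Finset (Subgroup G)) : Prop :=
  (∀ H ∈ S, H ≠ ⊤) ∧ ∀ g : G, ∃ H ∈ S, g ∈ H

/-- An irredundant cover: a cover with no proper subcollection that is also a cover. -/
def IsIrredundantCover {G : Type*} [Group G] (S : Finset (Subgroup G)) : Prop :=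
  IsCover S ∧ ∀ T : Finset (Subgroup G), T ⊂ S → ¬ IsCover T

/-- β(G): the number of irredundant covers of G. -/
noncomputable def beta (G : Type*) [Group G] : ℕ :=
  Nat.card {S : Finset (Subgroup G) // IsIrredundantCover S}

/-- A maximal cyclic subgroup: cyclic, and not contained in any strictly larger cyclic subgroup. -/
def IsMaximalCyclic {G : Type*} [Group G] (C : Subgroup G) : Prop :=
  IsCyclic ↥C ∧ ∀ D : Subgroup G, IsCyclic ↥D → C ≤ D → D = C

/-- A cyclically embedded subgroup: ⟨N, x⟩ is cyclic for all x. -/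
def CyclicallyEmbedded {G : Type*} [Group G] (N : Subgroup G) : Prop :=
  ∀ x : G, IsCyclic ↥(N ⊔ Subgroup.zpowers x)

section Aux

set_option linter.unusedSectionVars false
open scoped Classical

variable {G : Type*} [Group G] [Finite G]

lemma aux_zpowers_isCyclic (g : G) : IsCyclic ↥(Subgroup.zpowers g) := by
  refine ⟨⟨⟨g, Subgroup.mem_zpowers g⟩, ?_⟩⟩
  rintro ⟨x, hx⟩
  obtain ⟨k, hk⟩ := Subgroup.mem_zpowers_iff.mp hx
  exact Subgroup.mem_zpowers_iff.mpr ⟨k, Subtype.ext (by simpa using hk)⟩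

lemma aux_exists_gen {C : Subgroup G} (hC : IsCyclic ↥C) :
    ∃ g : G, g ∈ C ∧ ∀ H : Subgroup G, g ∈ H → C ≤ H := by
  obtain ⟨⟨g, hg⟩, hgen⟩ := hC.exists_generator
  refine ⟨g, hg, fun H hgH x hx => ?_⟩
  obtain ⟨k, hk⟩ := Subgroup.mem_zpowers_iff.mp (hgen ⟨x, hx⟩)
  have hx' : g ^ k = x := by simpa using congrArg Subtype.val hk
  exact hx' ▸ H.zpow_mem hgH k

lemma aux_exists_maxCyc (g : G) : ∃ C : Subgroup G, IsMaximalCyclic C ∧ g ∈ C := by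
  obtain ⟨C, hle, hmax⟩ :=
    Finite.exists_le_maximal (p := fun C : Subgroup G => IsCyclic ↥C) (aux_zpowers_isCyclic g)
  exact ⟨C, ⟨hmax.1, fun D hD hCD => le_antisymm (hmax.2 hD hCD) hCD⟩,
    hle (Subgroup.mem_zpowers g)⟩

lemma aux_maxCyc_ne_top (hG : ¬ IsCyclic G) {C : Subgroup G} (hC : IsMaximalCyclic C) :
    C ≠ ⊤ := by
  rintro rfl
  haveI := hC.1
  exact hG (isCyclic_of_surjective _ (Subgroup.topEquiv (G := G)).surjective)

lemma aux_exists_private {S : Finset (Subgroup G)} (hS : IsIrredundantCover S)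
    {K : Subgroup G} (hK : K ∈ S) :
    ∃ x : G, x ∈ K ∧ ∀ H ∈ S, x ∈ H → H = K := by
  have hnc := hS.2 _ (Finset.erase_ssubset hK)
  rw [IsCover] at hnc
  push_neg at hnc
  obtain ⟨x, hx⟩ := hnc (fun H hH => hS.1.1 H (Finset.mem_of_mem_erase hH))
  have hpriv : ∀ H ∈ S, x ∈ H → H = K := by
    intro H hH hxH
    by_contra hne
    exact hx H (Finset.mem_erase.mpr ⟨hne, hH⟩) hxH
  obtain ⟨H, hHS, hxH⟩ := hS.1.2 x
  exact ⟨x, hpriv H hHS hxH ▸ hxH, hpriv⟩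

lemma aux_irred_of_private {S : Finset (Subgroup G)} (hcov : IsCover S)
    (hpriv : ∀ K ∈ S, ∃ x : G, ∀ H ∈ S, x ∈ H → H = K) : IsIrredundantCover S := by
  refine ⟨hcov, fun T hT hTc => ?_⟩
  obtain ⟨K, hKS, hKT⟩ := Finset.exists_of_ssubset hT
  obtain ⟨x, hx⟩ := hpriv K hKS
  obtain ⟨H, hHT, hxH⟩ := hTc.2 x
  exact hKT ((hx H (hT.1 hHT) hxH) ▸ hHT)

/-- The collection of maximal cyclic subgroups not contained in any member of `N`. -/
noncomputable def mcF (N : Finset (Subgroup G)) : Finset (Subgroup G) :=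
  (Set.toFinite {C : Subgroup G | IsMaximalCyclic C ∧ ∀ H ∈ N, ¬ C ≤ H}).toFinset

lemma mem_mcF {N : Finset (Subgroup G)} {C : Subgroup G} :
    C ∈ mcF N ↔ IsMaximalCyclic C ∧ ∀ H ∈ N, ¬ C ≤ H := by
  simp [mcF]

/-- The noncyclic members of a collection. -/
noncomputable def ncF (S : Finset (Subgroup G)) : Finset (Subgroup G) :=
  (Set.toFinite {H : Subgroup G | H ∈ S ∧ ¬ IsCyclic ↥H}).toFinset

lemma mem_ncF {S : Finset (Subgroup G)} {H : Subgroup G} :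
    H ∈ ncF S ↔ H ∈ S ∧ ¬ IsCyclic ↥H := by
  simp [ncF]

lemma aux_cover_cyclic_part {S : Finset (Subgroup G)} (hS : IsIrredundantCover S)
    {C : Subgroup G} (hCS : C ∈ S) (hCc : IsCyclic ↥C) :
    IsMaximalCyclic C ∧ ∀ H ∈ S, ¬ IsCyclic ↥H → ¬ C ≤ H := by
  obtain ⟨x, hxC, hxpriv⟩ := aux_exists_private hS hCS
  obtain ⟨g, hgC, hgen⟩ := aux_exists_gen hCc
  obtain ⟨D, hD, hgD⟩ := aux_exists_maxCyc g
  have hCD : C ≤ D := hgen D hgD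
  obtain ⟨h, hhD, hhgen⟩ := aux_exists_gen hD.1
  obtain ⟨K, hKS, hhK⟩ := hS.1.2 h
  have hDK : D ≤ K := hhgen K hhK
  have hKC : K = C := hxpriv K hKS (hDK (hCD hxC))
  have hCeqD : C = D := le_antisymm hCD (hKC ▸ hDK)
  refine ⟨hCeqD ▸ hD, fun H hHS hHnc hle => ?_⟩
  exact hHnc ((hxpriv H hHS (hle hxC)) ▸ hCc)

lemma aux_cover_contains_mc {S : Finset (Subgroup G)} (hS : IsIrredundantCover S)
    {C : Subgroup G} (hC : IsMaximalCyclic C)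
    (h : ∀ H ∈ S, ¬ IsCyclic ↥H → ¬ C ≤ H) : C ∈ S := by
  obtain ⟨g, hgC, hgen⟩ := aux_exists_gen hC.1
  obtain ⟨K, hKS, hgK⟩ := hS.1.2 g
  have hCK : C ≤ K := hgen K hgK
  by_cases hKc : IsCyclic ↥K
  · exact (hC.2 K hKc hCK) ▸ hKS
  · exact absurd hCK (h K hKS hKc)

lemma aux_cover_eq {S : Finset (Subgroup G)} (hS : IsIrredundantCover S) :
    S = ncF S ∪ mcF (ncF S) := by
  ext C
  simp only [Finset.mem_union, mem_mcF, mem_ncF]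
  constructor
  · intro hCS
    by_cases hc : IsCyclic ↥C
    · obtain ⟨h1, h2⟩ := aux_cover_cyclic_part hS hCS hc
      exact Or.inr ⟨h1, fun H hH => h2 H hH.1 hH.2⟩
    · exact Or.inl ⟨hCS, hc⟩
  · rintro (⟨h, _⟩ | ⟨h1, h2⟩)
    · exact h
    · exact aux_cover_contains_mc hS h1 (fun H hH hHc => h2 H ⟨hH, hHc⟩)

lemma aux_union_irred (hG : ¬ IsCyclic G) {N : Finset (Subgroup G)}
    (hproper : ∀ H ∈ N, H ≠ ⊤)
    (hpriv : ∀ K ∈ N, ∃ x : G, (∀ H ∈ N, x ∈ H → H = K) ∧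
        ∀ C : Subgroup G, IsMaximalCyclic C → (∀ H ∈ N, ¬ C ≤ H) → x ∉ C) :
    IsIrredundantCover (N ∪ mcF N) := by
  refine aux_irred_of_private ⟨?_, ?_⟩ ?_
  · intro H hH
    rcases Finset.mem_union.mp hH with h | h
    · exact hproper H h
    · exact aux_maxCyc_ne_top hG (mem_mcF.mp h).1
  · intro g
    obtain ⟨C, hC, hgC⟩ := aux_exists_maxCyc g
    by_cases h : ∀ H ∈ N, ¬ C ≤ H
    · exact ⟨C, Finset.mem_union_right _ (mem_mcF.mpr ⟨hC, h⟩), hgC⟩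
    · push_neg at h
      obtain ⟨H, hHN, hCH⟩ := h
      exact ⟨H, Finset.mem_union_left _ hHN, hCH hgC⟩
  · intro K hK
    rcases Finset.mem_union.mp hK with h | h
    · obtain ⟨x, hx1, hx2⟩ := hpriv K h
      refine ⟨x, fun H hH hxH => ?_⟩
      rcases Finset.mem_union.mp hH with h' | h'
      · exact hx1 H h' hxH
      · obtain ⟨hC, hle⟩ := mem_mcF.mp h'
        exact absurd hxH (hx2 H hC hle)
    · obtain ⟨hC, hle⟩ := mem_mcF.mp h
      obtain ⟨g, hgK, hgen⟩ := aux_exists_gen hC.1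
      refine ⟨g, fun H hH hgH => ?_⟩
      rcases Finset.mem_union.mp hH with h' | h'
      · exact absurd (hgen H hgH) (hle H h')
      · exact hC.2 H (mem_mcF.mp h').1.1 (hgen H hgH)

lemma aux_ncF_union {N : Finset (Subgroup G)} (hN : ∀ H ∈ N, ¬ IsCyclic ↥H) :
    ncF (N ∪ mcF N) = N := by
  ext H
  simp only [mem_ncF, Finset.mem_union, mem_mcF]
  constructor
  · rintro ⟨h | h, hnc⟩
    · exact h
    · exact absurd h.1.1 hnc
  · exact fun h => ⟨Or.inl h, hN H h⟩

end Aux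

set_option linter.unusedSectionVars false
open scoped Classical in
theorem stmt18 {G : Type*} [Group G] [Finite G] (hG : ¬ IsCyclic G)
    (m : ℕ) (M : Finset (Subgroup G)) (hMcard : M.card = m)
    (hM : ∀ H : Subgroup G, H ∈ M ↔
      (H ≠ ⊤ ∧ ¬ IsCyclic ↥H ∧ ∃ S : Finset (Subgroup G), IsIrredundantCover S ∧ H ∈ S)) :
    m + 1 ≤ beta G ∧ beta G ≤ 2 ^ m := by
  haveI := Fintype.ofFinite (Subgroup G)
  constructor
  · -- lower bound
    have hEmpty : IsIrredundantCover ((∅ : Finset (Subgroup G)) ∪ mcF ∅) :=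
      aux_union_irred hG (by simp) (by simp)
    have hF : ∀ H ∈ M, IsIrredundantCover ({H} ∪ mcF {H}) := by
      intro H hH
      obtain ⟨hne, hnc, S, hS, hHS⟩ := (hM H).mp hH
      refine aux_union_irred hG (by simpa using hne) ?_
      intro K hK
      rw [Finset.mem_singleton] at hK
      subst hK
      obtain ⟨x, hxK, hxpriv⟩ := aux_exists_private hS hHS
      refine ⟨x, by simp, fun C hC hle hxC => ?_⟩
      obtain ⟨g, hgC, hgen⟩ := aux_exists_gen hC.1
      obtain ⟨L, hLS, hgL⟩ := hS.1.2 g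
      have hCL : C ≤ L := hgen L hgL
      have := hxpriv L hLS (hCL hxC)
      exact hle K (Finset.mem_singleton_self K) (this ▸ hCL)
    let f : Option {H // H ∈ M} → {S : Finset (Subgroup G) // IsIrredundantCover S} :=
      fun o => match o with
      | none => ⟨∅ ∪ mcF ∅, hEmpty⟩
      | some ⟨H, hH⟩ => ⟨{H} ∪ mcF {H}, hF H hH⟩
    have hnc : ∀ H ∈ M, ¬ IsCyclic ↥H := fun H hH => ((hM H).mp hH).2.1
    have e0 : ncF ((∅ : Finset (Subgroup G)) ∪ mcF ∅) = ∅ := aux_ncF_union (by simp)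
    have e1 : ∀ H ∈ M, ncF ({H} ∪ mcF {H}) = {H} := by
      intro H hH
      exact aux_ncF_union (by simpa using hnc H hH)
    have hfinj : Function.Injective f := by
      intro a b hab
      have hab' := congrArg (fun S => ncF S.1) hab
      match a, b, hab' with
      | none, none, _ => rfl
      | none, some ⟨H, hH⟩, hab' =>
        simp only [f] at hab'
        rw [e0, e1 H hH] at hab'
        exact absurd hab'.symm (Finset.singleton_ne_empty H)
      | some ⟨H, hH⟩, none, hab' =>
        simp only [f] at hab'
        rw [e0, e1 H hH] at hab'
        exact absurd hab' (Finset.singleton_ne_empty H)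
      | some ⟨H, hH⟩, some ⟨K, hK⟩, hab' =>
        simp only [f] at hab'
        rw [e1 H hH, e1 K hK] at hab'
        simp only [Option.some.injEq]
        exact Subtype.ext (Finset.singleton_inj.mp hab')
    haveI : Finite {S : Finset (Subgroup G) // IsIrredundantCover S} := Subtype.finite
    have := Nat.card_le_card_of_injective f hfinj
    rwa [Finite.card_option, Nat.card_eq_finsetCard, hMcard] at this
  · -- upper bound
    have hsub : ∀ S : {S : Finset (Subgroup G) // IsIrredundantCover S}, ncF S.1 ⊆ M := by
      rintro ⟨S, hS⟩ H hH
      obtain ⟨hHS, hnc⟩ := mem_ncF.mp hH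
      exact (hM H).mpr ⟨hS.1.1 H hHS, hnc, S, hS, hHS⟩
    let g : {S : Finset (Subgroup G) // IsIrredundantCover S} →
        {T : Finset (Subgroup G) // T ⊆ M} := fun S => ⟨ncF S.1, hsub S⟩
    have hginj : Function.Injective g := by
      rintro ⟨S₁, h₁⟩ ⟨S₂, h₂⟩ h
      have h' : ncF S₁ = ncF S₂ := congrArg Subtype.val h
      have hS : S₁ = S₂ := by rw [aux_cover_eq h₁, aux_cover_eq h₂, h']
      exact Subtype.ext hS
    haveI : Finite {T : Finset (Subgroup G) // T ⊆ M} := Subtype.finite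
    have hle := Nat.card_le_card_of_injective g hginj
    have hcard : Nat.card {T : Finset (Subgroup G) // T ⊆ M} = 2 ^ m := by
      have h1 := Nat.card_eq_finsetCard M.powerset
      rw [Finset.card_powerset, hMcard] at h1
      rw [← h1]
      exact Nat.card_congr (Equiv.subtypeEquivRight (fun T => (Finset.mem_powerset).symm))
    rwa [hcard] at hle
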